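/- Let S be a monoid, A an S-act with no zero elements, B any S-act, z a one-point trivial S-act, and I a nonempty set. Then B ⊔ A^{(*)I} ⊔ z is geometrically equivalent to B ⊔ A ⊔ z, where A^{(*)I} is the coproduct of I copies of A. -/

import Mathlib

/-- The kernel of a map, as a set of pairs. -/
def actKer {A B : Type} (f : A → B) : Set (A × A) := {p | f p.1 = f p.2}

/-- A homomorphism of left `S`-acts is an `S`-equivariant map. -/
def IsActHom (S : Type) [Monoid S] {A B : Type} [MulAction S A] [MulAction S B]
    (f : A → B) : Prop := ∀ (s : S) (a : A), f (s • a) = s • f a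

/-- The free left `S`-act on `n` generators: a coproduct of `n` copies of `S`. -/
def FreeAct (S : Type) (n : ℕ) : Type := Fin n × S

instance (S : Type) [Monoid S] (n : ℕ) : SMul S (FreeAct S n) :=
  ⟨fun s p => (p.1, s * p.2)⟩

instance (S : Type) [Monoid S] (n : ℕ) : MulAction S (FreeAct S n) where
  one_smul p := show (p.1, 1 * p.2) = p by rw [one_mul]; rfl
  mul_smul s t p := show (p.1, (s * t) * p.2) = (p.1, s * (t * p.2)) by rw [mul_assoc]

/-- A congruence on an `S`-act: an equivalence relation compatible with the action. -/
def IsCongruence (S : Type) [Monoid S] {A : Type} [MulAction S A]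
    (T : Set (A × A)) : Prop :=
  Equivalence (fun a b => (a, b) ∈ T) ∧
    ∀ (s : S) (a b : A), (a, b) ∈ T → (s • a, s • b) ∈ T

/-- The `G`-closure `T''` of a binary relation `T` on a free `S`-act:
the intersection of the kernels of all homomorphisms into `G` whose kernel contains `T`. -/
def actClosure (S : Type) [Monoid S] (G : Type) [MulAction S G] {n : ℕ}
    (T : Set (FreeAct S n × FreeAct S n)) : Set (FreeAct S n × FreeAct S n) :=
  {p | ∀ f : FreeAct S n → G, IsActHom S f → T ⊆ actKer f → f p.1 = f p.2}

/-- `T` is a `G`-closed congruence: an intersection of kernels of a set of homomorphisms. -/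
def GClosed (S : Type) [Monoid S] (G : Type) [MulAction S G] {n : ℕ}
    (T : Set (FreeAct S n × FreeAct S n)) : Prop :=
  ∃ A : Set (FreeAct S n → G), (∀ f ∈ A, IsActHom S f) ∧
    T = {p | ∀ f ∈ A, f p.1 = f p.2}

/-- Geometric equivalence of `S`-acts. -/
def GeomEquiv (S : Type) [Monoid S] (G₁ G₂ : Type) [MulAction S G₁] [MulAction S G₂] : Prop :=
  ∀ (n : ℕ) (T : Set (FreeAct S n × FreeAct S n)),
    actClosure S G₁ T = actClosure S G₂ T

/-- Coproduct (disjoint union) action on `A ⊕ B`. -/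
instance (S : Type) [Monoid S] {A B : Type} [MulAction S A] [MulAction S B] :
    SMul S (A ⊕ B) :=
  ⟨fun s x => match x with
    | Sum.inl a => Sum.inl (s • a)
    | Sum.inr b => Sum.inr (s • b)⟩

instance (S : Type) [Monoid S] {A B : Type} [MulAction S A] [MulAction S B] :
    MulAction S (A ⊕ B) where
  one_smul x := by
    cases x with
    | inl a => show Sum.inl ((1 : S) • a) = _; rw [one_smul]
    | inr b => show Sum.inr ((1 : S) • b) = _; rw [one_smul]
  mul_smul s t x := by
    cases x with
    | inl a => show Sum.inl ((s * t) • a) = Sum.inl (s • t • a); rw [mul_smul]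
    | inr b => show Sum.inr ((s * t) • b) = Sum.inr (s • t • b); rw [mul_smul]

/-- `Copies I A` is the coproduct of `I` copies of the `S`-act `A`. -/
def Copies (I A : Type) : Type := I × A

instance (S : Type) [Monoid S] {I A : Type} [MulAction S A] : SMul S (Copies I A) :=
  ⟨fun s p => (p.1, s • p.2)⟩

instance (S : Type) [Monoid S] {I A : Type} [MulAction S A] : MulAction S (Copies I A) where
  one_smul p := show (p.1, (1 : S) • p.2) = p by rw [one_smul]; rfl
  mul_smul s t p := show (p.1, (s * t) • p.2) = (p.1, s • t • p.2) by rw [mul_smul]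


/-- For an `S`-act `A` with no zero element, any `S`-act `B`, a one-point
trivial act `z`, and a nonempty set `I`, we have `B ⊔ A^{(*)I} ⊔ z ∼ B ⊔ A ⊔ z`. -/
theorem copies_plus_zero_geom_equiv
    (S : Type) [Monoid S] (A : Type) [MulAction S A]
    (hA : ¬ ∃ a : A, ∀ s : S, s • a = a)
    (B : Type) [MulAction S B] (I : Type) [Nonempty I] :
    GeomEquiv S (B ⊕ (Copies I A ⊕ PUnit)) (B ⊕ (A ⊕ PUnit)) := by
  classical
  obtain ⟨i₀⟩ := ‹Nonempty I›
  -- injection G₂ → G₁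
  let ι : B ⊕ (A ⊕ PUnit) → B ⊕ (Copies I A ⊕ PUnit) := fun x =>
    match x with
    | Sum.inl b => Sum.inl b
    | Sum.inr (Sum.inl a) => Sum.inr (Sum.inl ((i₀, a) : Copies I A))
    | Sum.inr (Sum.inr u) => Sum.inr (Sum.inr u)
  have hι : IsActHom S ι := by
    rintro s (b | a | u) <;> rfl
  have hιinj : Function.Injective ι := by
    rintro (b | a | ⟨⟩) (b' | a' | ⟨⟩) h <;>
      simp only [ι, Sum.inl.injEq, Sum.inr.injEq, Prod.mk.injEq, reduceCtorEq,
        true_and] at h <;>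
      first | rw [h] | rfl | (injection h with h1 h2; rw [h2]) | (injection h with h1; injection h1 with h2 h3; rw [h3])
  -- collapse map G₁ → G₂
  let π : B ⊕ (Copies I A ⊕ PUnit) → B ⊕ (A ⊕ PUnit) := fun x =>
    match x with
    | Sum.inl b => Sum.inl b
    | Sum.inr (Sum.inl p) => Sum.inr (Sum.inl p.2)
    | Sum.inr (Sum.inr u) => Sum.inr (Sum.inr u)
  have hπ : IsActHom S π := by
    rintro s (b | p | u) <;> rfl
  -- per-index maps
  let φ : I → (B ⊕ (Copies I A ⊕ PUnit) → B ⊕ (A ⊕ PUnit)) := fun i x =>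
    match x with
    | Sum.inl b => Sum.inl b
    | Sum.inr (Sum.inl p) =>
        if p.1 = i then Sum.inr (Sum.inl p.2) else Sum.inr (Sum.inr PUnit.unit)
    | Sum.inr (Sum.inr _) => Sum.inr (Sum.inr PUnit.unit)
  have hφ : ∀ i : I, IsActHom S (φ i) := by
    intro i s x
    rcases x with b | ⟨j, a⟩ | u
    · rfl
    · show (if j = i then _ else _) = s • (if j = i then _ else _)
      by_cases h : j = i
      · rw [if_pos h, if_pos h]; rfl
      · rw [if_neg h, if_neg h]; rfl
    · rfl
  intro n T
  ext p
  simp only [actClosure, Set.mem_setOf_eq]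
  constructor
  · -- closure G₁ ⊆ closure G₂ via ι
    intro h f hf hT
    have key := h (ι ∘ f) (by
        intro s a
        simp only [Function.comp_apply]
        rw [hf s a]
        exact hι s (f a))
      (by
        intro q hq
        have : f q.1 = f q.2 := hT hq
        simp [actKer, Function.comp, this])
    exact hιinj key
  · -- closure G₂ ⊆ closure G₁ via π and φ i
    intro h f hf hT
    have hπk := h (π ∘ f) (by
        intro s a
        simp only [Function.comp_apply]
        rw [hf s a]
        exact hπ s (f a))
      (by
        intro q hq
        have : f q.1 = f q.2 := hT hq
        simp [actKer, Function.comp, this])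
    have hφk : ∀ i : I, (φ i) (f p.1) = (φ i) (f p.2) := fun i =>
      h (φ i ∘ f) (by
        intro s a
        simp only [Function.comp_apply]
        rw [hf s a]
        exact hφ i s (f a))
      (by
        intro q hq
        have : f q.1 = f q.2 := hT hq
        simp [actKer, Function.comp, this])
    simp only [Function.comp_apply] at hπk hφk
    rcases h1 : f p.1 with b | ⟨i, a⟩ | ⟨⟩ <;> rcases h2 : f p.2 with b' | ⟨i', a'⟩ | ⟨⟩ <;>
        rw [h1, h2] at hπk <;>
        simp only [π, Sum.inl.injEq, Sum.inr.injEq, reduceCtorEq] at hπk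
    · rw [hπk]
    · -- both in Copies I A
      have hi := hφk i
      rw [h1, h2] at hi
      simp only [φ, if_true] at hi
      by_cases hii : i' = i
      · rw [if_pos hii] at hi
        injection hi with hi
        injection hi with hi
        rw [hπk, hii]
      · rw [if_neg hii] at hi
        exact absurd hi (by simp)
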